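/- Let Z_1, …, Z_n ∈ ℝ^p with ‖Z_i‖_∞ ≤ K_Z for all i, let Y_1, …, Y_n ∈ {0,1} with ∑_i Y_i ≥ 1, and for β ∈ ℝ^p define the weighted average Z̄(β) := ∑_i Z_i Y_i e^{β^⊤Z_i} / ∑_i Y_i e^{β^⊤Z_i}. Then for any β, γ ∈ ℝ^p, ‖Z̄(β) − Z̄(γ)‖_∞ ≤ 2 K_Z (e^{K_Z ‖β − γ‖₁} − 1). -/

import Mathlib

open Finset

lemma abs_one_sub_exp_le (x : ℝ) : |1 - Real.exp x| ≤ Real.exp |x| - 1 := by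
  have h1 := Real.add_one_le_exp (-x)
  have h2 := Real.add_one_le_exp x
  rcases le_or_gt 0 x with h | h
  · rw [abs_of_nonneg h]
    rw [abs_sub_comm, abs_of_nonneg (by linarith [Real.one_le_exp h])]
  · rw [abs_of_neg h, abs_of_nonneg (by linarith [Real.exp_lt_one_iff.mpr h])]
    linarith

theorem weighted_avg_diff_le {n p : ℕ}
    (K_Z : ℝ) (hK : 0 < K_Z) (Y : Fin n → ℝ) (Z : Fin n → Fin p → ℝ)
    (β γ : Fin p → ℝ)
    (hY : ∀ i, Y i = 0 ∨ Y i = 1)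
    (hY1 : 1 ≤ ∑ i, Y i)
    (hZ : ∀ i j, |Z i j| ≤ K_Z)
    (Zbar : (Fin p → ℝ) → Fin p → ℝ)
    (hZbar : ∀ b k, Zbar b k =
      (∑ i, Z i k * (Y i * Real.exp (∑ j, b j * Z i j))) /
        ∑ i, Y i * Real.exp (∑ j, b j * Z i j)) :
    ∀ k, |Zbar β k - Zbar γ k| ≤
      2 * K_Z * (Real.exp (K_Z * ∑ j, |β j - γ j|) - 1) := by
  intro k
  set D : ℝ := K_Z * ∑ j, |β j - γ j| with hD
  have hd0 : 0 ≤ D := mul_nonneg hK.le (Finset.sum_nonneg fun j _ => abs_nonneg _)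
  have hE : (0:ℝ) ≤ Real.exp D - 1 := by
    have := Real.one_le_exp hd0; linarith
  set wβ : Fin n → ℝ := fun i => Y i * Real.exp (∑ j, β j * Z i j) with hwβ
  set wγ : Fin n → ℝ := fun i => Y i * Real.exp (∑ j, γ j * Z i j) with hwγ
  have hYnn : ∀ i, 0 ≤ Y i := fun i => by rcases hY i with h | h <;> simp [h]
  have hwβnn : ∀ i, 0 ≤ wβ i := fun i => mul_nonneg (hYnn i) (Real.exp_pos _).le
  have hwγnn : ∀ i, 0 ≤ wγ i := fun i => mul_nonneg (hYnn i) (Real.exp_pos _).le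
  obtain ⟨i0, hi0⟩ : ∃ i, Y i = 1 := by
    by_contra h
    push_neg at h
    have h0 : ∀ i, Y i = 0 := fun i => (hY i).resolve_right (h i)
    simp [h0] at hY1
    linarith
  have hBpos : 0 < ∑ i, wβ i := by
    apply Finset.sum_pos' (fun i _ => hwβnn i)
    exact ⟨i0, Finset.mem_univ _, by simp [hwβ, hi0, Real.exp_pos]⟩
  have hB'pos : 0 < ∑ i, wγ i := by
    apply Finset.sum_pos' (fun i _ => hwγnn i)
    exact ⟨i0, Finset.mem_univ _, by simp [hwγ, hi0, Real.exp_pos]⟩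
  -- pointwise bound
  have key : ∀ i, |wβ i - wγ i| ≤ (Real.exp D - 1) * wβ i := by
    intro i
    set a : ℝ := ∑ j, β j * Z i j with ha
    set b : ℝ := ∑ j, γ j * Z i j with hb
    have habs : |b - a| ≤ D := by
      rw [hb, ha, ← Finset.sum_sub_distrib]
      calc |∑ j, (γ j * Z i j - β j * Z i j)| ≤ ∑ j, |γ j * Z i j - β j * Z i j| :=
            Finset.abs_sum_le_sum_abs _ _
        _ ≤ ∑ j, |β j - γ j| * K_Z := by
            apply Finset.sum_le_sum
            intro j _
            rw [← sub_mul, abs_mul, abs_sub_comm]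
            exact mul_le_mul_of_nonneg_left (hZ i j) (abs_nonneg _)
        _ = D := by rw [hD, ← Finset.sum_mul, mul_comm]
    have heq : wβ i - wγ i = wβ i * (1 - Real.exp (b - a)) := by
      simp only [hwβ, hwγ, ← ha, ← hb]
      rw [Real.exp_sub]
      field_simp
    rw [heq, abs_mul, abs_of_nonneg (hwβnn i)]
    calc wβ i * |1 - Real.exp (b - a)| ≤ wβ i * (Real.exp |b - a| - 1) :=
          mul_le_mul_of_nonneg_left (abs_one_sub_exp_le _) (hwβnn i)
      _ ≤ wβ i * (Real.exp D - 1) := by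
          have := Real.exp_le_exp.mpr habs
          exact mul_le_mul_of_nonneg_left (by linarith) (hwβnn i)
      _ = (Real.exp D - 1) * wβ i := mul_comm _ _
  set A : ℝ := ∑ i, Z i k * wβ i with hA
  set A' : ℝ := ∑ i, Z i k * wγ i with hA'
  set B : ℝ := ∑ i, wβ i with hB
  set B' : ℝ := ∑ i, wγ i with hB'
  have hAA' : |A - A'| ≤ K_Z * (Real.exp D - 1) * B := by
    rw [hA, hA', ← Finset.sum_sub_distrib]
    calc |∑ i, (Z i k * wβ i - Z i k * wγ i)| ≤ ∑ i, |Z i k * wβ i - Z i k * wγ i| :=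
          Finset.abs_sum_le_sum_abs _ _
      _ ≤ ∑ i, K_Z * ((Real.exp D - 1) * wβ i) := by
          apply Finset.sum_le_sum
          intro i _
          rw [← mul_sub, abs_mul]
          exact mul_le_mul (hZ i k) (key i) (abs_nonneg _) hK.le
      _ = K_Z * (Real.exp D - 1) * B := by
          simp only [← Finset.mul_sum]
          rw [← hB]; ring
  have hBB' : |B - B'| ≤ (Real.exp D - 1) * B := by
    rw [hB, hB', ← Finset.sum_sub_distrib]
    calc |∑ i, (wβ i - wγ i)| ≤ ∑ i, |wβ i - wγ i| := Finset.abs_sum_le_sum_abs _ _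
      _ ≤ ∑ i, (Real.exp D - 1) * wβ i := Finset.sum_le_sum fun i _ => key i
      _ = (Real.exp D - 1) * B := by rw [hB, Finset.mul_sum]
  have hA'le : |A'| ≤ K_Z * B' := by
    rw [hA', hB']
    calc |∑ i, Z i k * wγ i| ≤ ∑ i, |Z i k * wγ i| := Finset.abs_sum_le_sum_abs _ _
      _ ≤ ∑ i, K_Z * wγ i := by
          apply Finset.sum_le_sum
          intro i _
          rw [abs_mul, abs_of_nonneg (hwγnn i)]
          exact mul_le_mul_of_nonneg_right (hZ i k) (hwγnn i)
      _ = K_Z * ∑ i, wγ i := (Finset.mul_sum _ _ _).symm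
  have hgoal : Zbar β k - Zbar γ k = (A - A') / B - A' * (B - B') / (B' * B) := by
    rw [hZbar, hZbar]
    simp only [← hwβ, ← hwγ, ← hA, ← hA', ← hB, ← hB']
    field_simp
    rw [hA, hA']
    simp only [hwβ, hwγ, mul_assoc]
    ring
  rw [hgoal]
  have h1 : |(A - A') / B| ≤ K_Z * (Real.exp D - 1) := by
    rw [abs_div, abs_of_pos hBpos, div_le_iff₀ hBpos]
    exact hAA'
  have h2 : |A' * (B - B') / (B' * B)| ≤ K_Z * (Real.exp D - 1) := by
    rw [abs_div, abs_of_pos (mul_pos hB'pos hBpos), div_le_iff₀ (mul_pos hB'pos hBpos),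
      abs_mul]
    calc |A'| * |B - B'| ≤ (K_Z * B') * ((Real.exp D - 1) * B) :=
          mul_le_mul hA'le hBB' (abs_nonneg _) (by positivity)
      _ = K_Z * (Real.exp D - 1) * (B' * B) := by ring
  calc |(A - A') / B - A' * (B - B') / (B' * B)|
      ≤ |(A - A') / B| + |A' * (B - B') / (B' * B)| := abs_sub _ _
    _ ≤ K_Z * (Real.exp D - 1) + K_Z * (Real.exp D - 1) := add_le_add h1 h2
    _ = 2 * K_Z * (Real.exp D - 1) := by ring
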